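/- Let X be a completely regular Hausdorff (Tychonoff) space and let H be a non-vanishing closed ideal of C_B(X). Then sp(H) = λ_H X is an open subspace of βX (hence locally compact Hausdorff), contains X as a dense subspace, and H is isometrically isomorphic (as a normed algebra) to C₀(sp(H)), the algebra of continuous 𝔽-valued functions on sp(H) vanishing at infinity. -/

import Mathlib

open BoundedContinuousFunction Set Filter Topology

section Preamble

variable {X : Type*} [TopologicalSpace X] {𝕜 : Type*} [RCLike 𝕜]

theorem betaExt_aux (f : X →ᵇ 𝕜) :
    Continuous (fun x => (⟨f x, by
      simpa [Metric.mem_closedBall, dist_zero_right] using f.norm_coe_le_norm x⟩ :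
        Metric.closedBall (0 : 𝕜) ‖f‖)) :=
  f.continuous.subtype_mk _

/-- `f_β`, the unique continuous extension of a bounded continuous function `f : X → 𝕜` to the
Stone–Čech compactification `βX`. -/
noncomputable def betaExt (f : X →ᵇ 𝕜) : StoneCech X → 𝕜 :=
  haveI : CompactSpace (Metric.closedBall (0 : 𝕜) ‖f‖) :=
    isCompact_iff_compactSpace.mp (isCompact_closedBall 0 ‖f‖)
  fun p => (stoneCechExtend (betaExt_aux f) p).1

theorem betaExt_unit (f : X →ᵇ 𝕜) (x : X) : betaExt f (stoneCechUnit x) = f x := by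
  haveI : CompactSpace (Metric.closedBall (0 : 𝕜) ‖f‖) :=
    isCompact_iff_compactSpace.mp (isCompact_closedBall 0 ‖f‖)
  exact congrArg Subtype.val (congrFun (stoneCechExtend_extends (betaExt_aux f)) x)

theorem continuous_betaExt (f : X →ᵇ 𝕜) : Continuous (betaExt f) := by
  haveI : CompactSpace (Metric.closedBall (0 : 𝕜) ‖f‖) :=
    isCompact_iff_compactSpace.mp (isCompact_closedBall 0 ‖f‖)
  exact continuous_subtype_val.comp (continuous_stoneCechExtend _)

/-- `λ_G X`, the union over `g ∈ G` of the cozero-sets in `βX` of the extensions `g_β`. -/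
def lambdaSet (G : Ideal (X →ᵇ 𝕜)) : Set (StoneCech X) :=
  ⋃ g ∈ G, {p | betaExt g p ≠ 0}

end Preamble

open scoped ZeroAtInfty

section Aux

variable {X : Type*} [TopologicalSpace X] {𝕜 : Type*} [RCLike 𝕜]

theorem betaExt_norm_le (f : X →ᵇ 𝕜) (p : StoneCech X) : ‖betaExt f p‖ ≤ ‖f‖ := by
  haveI : CompactSpace (Metric.closedBall (0 : 𝕜) ‖f‖) :=
    isCompact_iff_compactSpace.mp (isCompact_closedBall 0 ‖f‖)
  have h2 := (stoneCechExtend (betaExt_aux f) p).2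
  rw [Metric.mem_closedBall, dist_zero_right] at h2
  exact h2

theorem betaExt_unique {f : X →ᵇ 𝕜} {Φ : StoneCech X → 𝕜} (hΦ : Continuous Φ)
    (h : ∀ x, Φ (stoneCechUnit x) = f x) : betaExt f = Φ :=
  denseRange_stoneCechUnit.equalizer (continuous_betaExt f) hΦ
    (funext fun x => by simp [Function.comp, betaExt_unit, h x])

theorem betaExt_add (f g : X →ᵇ 𝕜) :
    betaExt (f + g) = fun p => betaExt f p + betaExt g p :=
  betaExt_unique ((continuous_betaExt f).add (continuous_betaExt g))
    (fun x => by simp [betaExt_unit])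

theorem betaExt_mul (f g : X →ᵇ 𝕜) :
    betaExt (f * g) = fun p => betaExt f p * betaExt g p :=
  betaExt_unique ((continuous_betaExt f).mul (continuous_betaExt g))
    (fun x => by simp [betaExt_unit])

theorem betaExt_smul (c : 𝕜) (f : X →ᵇ 𝕜) :
    betaExt (c • f) = fun p => c • betaExt f p :=
  betaExt_unique ((continuous_betaExt f).const_smul c)
    (fun x => by simp [betaExt_unit])

theorem isOpen_coz (g : X →ᵇ 𝕜) : IsOpen {p | betaExt g p ≠ 0} :=
  isOpen_compl_singleton.preimage (continuous_betaExt g)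

theorem lambdaSet_isOpen (G : Ideal (X →ᵇ 𝕜)) : IsOpen (lambdaSet G) :=
  isOpen_biUnion fun g _ => isOpen_coz g

theorem mem_lambdaSet {G : Ideal (X →ᵇ 𝕜)} {g : X →ᵇ 𝕜} (hg : g ∈ G)
    {p : StoneCech X} (hp : betaExt g p ≠ 0) : p ∈ lambdaSet G :=
  mem_biUnion hg hp

/-- The restriction of `f_β` to `λ_H X`, as a continuous function vanishing at infinity. -/
noncomputable def specMap (H : Ideal (X →ᵇ 𝕜)) (f : H) : C₀(lambdaSet H, 𝕜) where
  toFun q := betaExt (f : X →ᵇ 𝕜) ↑q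
  continuous_toFun := (continuous_betaExt _).comp continuous_subtype_val
  zero_at_infty' := by
    refine (Filter.hasBasis_cocompact.tendsto_iff Metric.nhds_basis_ball).mpr fun ε hε => ?_
    set S : Set (StoneCech X) := {p | ε ≤ ‖betaExt (f : X →ᵇ 𝕜) p‖} with hS
    have hScl : IsClosed S := isClosed_le continuous_const (continuous_betaExt _).norm
    have hSsub : S ⊆ lambdaSet H := fun p hp => mem_lambdaSet f.2 (by
      intro h0
      rw [mem_setOf_eq, h0, norm_zero] at hp
      exact absurd (lt_of_lt_of_le hε hp) (lt_irrefl _))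
    refine ⟨Subtype.val ⁻¹' S, ?_, fun q hq => ?_⟩
    · rw [IsEmbedding.subtypeVal.isCompact_iff]
      have : (Subtype.val : lambdaSet H → StoneCech X) '' (Subtype.val ⁻¹' S) = S := by
        rw [Subtype.image_preimage_coe, inter_eq_right.mpr hSsub]
      rw [this]
      exact hScl.isCompact
    · simp only [mem_compl_iff, mem_preimage, hS, mem_setOf_eq, not_le] at hq
      simpa [Metric.mem_ball, dist_zero_right] using hq

@[simp] theorem specMap_apply (H : Ideal (X →ᵇ 𝕜)) (f : H) (q : lambdaSet H) :
    specMap H f q = betaExt (f : X →ᵇ 𝕜) ↑q := by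
  rfl

end Aux

set_option maxHeartbeats 2000000

/-- For a Tychonoff space `X` and a non-vanishing closed ideal `H` of `C_B(X)`, the spectrum
`sp(H) = λ_H X` is open in `βX` (hence locally compact Hausdorff), contains (the copy of) `X`
as a dense subspace, and `H` is isometrically isomorphic as a normed algebra to
`C₀(sp(H))`. -/
theorem spectrum_spec {X : Type*} [TopologicalSpace X] [T35Space X]
    {𝕜 : Type*} [RCLike 𝕜] (H : Ideal (X →ᵇ 𝕜))
    (hcl : IsClosed (H : Set (X →ᵇ 𝕜))) (hnv : ∀ x : X, ∃ h ∈ H, h x ≠ 0) :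
    IsOpen (lambdaSet H) ∧
    LocallyCompactSpace (lambdaSet H) ∧ T2Space (lambdaSet H) ∧
    (∀ x : X, stoneCechUnit x ∈ lambdaSet H) ∧
    Dense {p : lambdaSet H | (p : StoneCech X) ∈ range (stoneCechUnit : X → StoneCech X)} ∧
    ∃ e : H → C₀(lambdaSet H, 𝕜),
      Function.Bijective e ∧
      (∀ f g : H, e (f + g) = e f + e g) ∧
      (∀ (c : 𝕜) (f : H), e ⟨c • (f : X →ᵇ 𝕜), H.smul_of_tower_mem c f.2⟩ = c • e f) ∧
      (∀ f g : H, e ⟨(f : X →ᵇ 𝕜) * (g : X →ᵇ 𝕜), H.mul_mem_left _ g.2⟩ = e f * e g) ∧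
      (∀ f : H, ‖e f‖ = ‖(f : X →ᵇ 𝕜)‖) := by
  classical
  have hopen : IsOpen (lambdaSet H) := lambdaSet_isOpen H
  have hmem : ∀ x : X, stoneCechUnit x ∈ lambdaSet H := by
    intro x
    obtain ⟨h, hH, hx⟩ := hnv x
    exact mem_lambdaSet hH (by rw [betaExt_unit]; exact hx)
  have hnorm : ∀ f : H, ‖specMap H f‖ = ‖(f : X →ᵇ 𝕜)‖ := by
    intro f
    refine le_antisymm ?_ ?_
    · rw [← ZeroAtInftyContinuousMap.norm_toBCF_eq_norm]
      exact (BoundedContinuousFunction.norm_le (norm_nonneg _)).mpr fun q =>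
        betaExt_norm_le _ _
    · refine (BoundedContinuousFunction.norm_le (norm_nonneg _)).mpr fun x => ?_
      calc ‖(f : X →ᵇ 𝕜) x‖
          = ‖(specMap H f).toBCF ⟨stoneCechUnit x, hmem x⟩‖ := by
            simp [betaExt_unit]
        _ ≤ ‖(specMap H f).toBCF‖ := BoundedContinuousFunction.norm_coe_le_norm _ _
        _ = ‖specMap H f‖ := ZeroAtInftyContinuousMap.norm_toBCF_eq_norm
  have hdense :
      Dense {p : lambdaSet H | (p : StoneCech X) ∈ range (stoneCechUnit : X → StoneCech X)} := by
    rw [dense_iff_inter_open]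
    rintro U hU ⟨u, hu⟩
    obtain ⟨V, hV, rfl⟩ := isOpen_induced_iff.mp hU
    obtain ⟨x, hx⟩ := denseRange_stoneCechUnit.exists_mem_open (hV.inter hopen) ⟨↑u, hu, u.2⟩
    exact ⟨⟨stoneCechUnit x, hx.2⟩, hx.1, ⟨x, rfl⟩⟩
  have hinj : Function.Injective (specMap H) := by
    intro f g hfg
    refine Subtype.ext (BoundedContinuousFunction.ext fun x => ?_)
    have := DFunLike.congr_fun hfg ⟨stoneCechUnit x, hmem x⟩
    simpa [betaExt_unit] using this
  have hsurj : Function.Surjective (specMap H) := by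
    intro φ
    set Φ : StoneCech X → 𝕜 := fun p => if h : p ∈ lambdaSet H then φ ⟨p, h⟩ else 0 with hΦdef
    have hΦpos : ∀ (p) (hp : p ∈ lambdaSet H), Φ p = φ ⟨p, hp⟩ := fun p hp => dif_pos hp
    have hφsmall : ∀ ε > (0 : ℝ), ∃ K : Set (lambdaSet H), IsCompact K ∧
        ∀ q ∉ K, ‖φ q‖ < ε := by
      intro ε hε
      obtain ⟨K, hKc, hK⟩ :=
        (Filter.hasBasis_cocompact.tendsto_iff Metric.nhds_basis_ball).mp
          (zero_at_infty φ) ε hε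
      exact ⟨K, hKc, fun q hq => by simpa [Metric.mem_ball, dist_zero_right] using hK q hq⟩
    have hΦcont : Continuous Φ := by
      rw [continuous_iff_continuousAt]
      intro p
      by_cases hp : p ∈ lambdaSet H
      · have hCO : ContinuousOn Φ (lambdaSet H) := by
          rw [continuousOn_iff_continuous_restrict]
          have hres : (lambdaSet H).restrict Φ = fun q => φ q := funext fun q => hΦpos _ q.2
          refine (map_continuous φ).congr fun q => ?_
          exact (hΦpos _ q.2).symm
        exact hCO.continuousAt (hopen.mem_nhds hp)
      · have hΦp : Φ p = 0 := dif_neg hp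
        rw [ContinuousAt, hΦp, Metric.tendsto_nhds]
        intro ε hε
        obtain ⟨K, hKc, hK⟩ := hφsmall ε hε
        have hK'c : IsCompact (Subtype.val '' K) := hKc.image continuous_subtype_val
        have hpK' : p ∈ (Subtype.val '' K)ᶜ := by
          rintro ⟨q, _, rfl⟩
          exact hp q.2
        filter_upwards [hK'c.isClosed.isOpen_compl.mem_nhds hpK'] with q hq
        rw [dist_zero_right]
        by_cases hqL : q ∈ lambdaSet H
        · rw [hΦpos q hqL]
          exact hK _ fun hmemK => hq (mem_image_of_mem _ hmemK)
        · have h0 : Φ q = 0 := dif_neg hqL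
          rw [h0, norm_zero]
          exact hε
    have hΦbound : ∀ p, ‖Φ p‖ ≤ ‖φ‖ := by
      intro p
      by_cases hp : p ∈ lambdaSet H
      · rw [hΦpos p hp, ← ZeroAtInftyContinuousMap.norm_toBCF_eq_norm]
        simpa using BoundedContinuousFunction.norm_coe_le_norm φ.toBCF ⟨p, hp⟩
      · have h0 : Φ p = 0 := dif_neg hp
        rw [h0, norm_zero]
        exact norm_nonneg _
    set f0 : X →ᵇ 𝕜 := BoundedContinuousFunction.ofNormedAddCommGroup
      (fun x => Φ (stoneCechUnit x)) (hΦcont.comp continuous_stoneCechUnit) ‖φ‖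
      (fun x => hΦbound _) with hf0def
    have hf0ext : betaExt f0 = Φ := betaExt_unique hΦcont (fun x => rfl)
    have hf0mem : f0 ∈ H := by
      have hmemcl : f0 ∈ closure (H : Set (X →ᵇ 𝕜)) := by
        rw [Metric.mem_closure_iff]
        intro ε hε
        obtain ⟨K, hKc, hK⟩ := hφsmall (ε / 2) (by positivity)
        by_cases hKne : K.Nonempty
        · have hK'c : IsCompact (Subtype.val '' K) := hKc.image continuous_subtype_val
          have hcover : Subtype.val '' K ⊆
              ⋃ i : H, {p : StoneCech X | betaExt (i : X →ᵇ 𝕜) p ≠ 0} := by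
            rintro p ⟨q, _, rfl⟩
            obtain ⟨g, hgH, hgp⟩ := mem_iUnion₂.mp q.2
            exact mem_iUnion.mpr ⟨⟨g, hgH⟩, hgp⟩
          obtain ⟨t, ht⟩ := hK'c.elim_finite_subcover _ (fun i : H => isOpen_coz _) hcover
          set hre : StoneCech X → ℝ :=
            fun p => ∑ i ∈ t, ‖betaExt (i : X →ᵇ 𝕜) p‖ ^ 2 with hredef
          have hrecont : Continuous hre := continuous_finset_sum _ fun i _ =>
            (continuous_betaExt _).norm.pow 2
          have hrenn : ∀ p, 0 ≤ hre p := fun p => Finset.sum_nonneg fun i _ => sq_nonneg _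
          have hrepos : ∀ p ∈ Subtype.val '' K, 0 < hre p := by
            intro p hp
            obtain ⟨i, hit, hip⟩ := mem_iUnion₂.mp (ht hp)
            exact Finset.sum_pos' (fun j _ => sq_nonneg _)
              ⟨i, hit, pow_pos (norm_pos_iff.mpr hip) 2⟩
          obtain ⟨p0, hp0K, hp0min⟩ :=
            hK'c.exists_isMinOn (hKne.image _) hrecont.continuousOn
          have hm : 0 < hre p0 := hrepos _ hp0K
          set m := hre p0 with hmdef
          set δ : ℝ := m * ε / (2 * (‖f0‖ + 1)) with hδdef
          have hδ : 0 < δ := by positivity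
          have hvcont : Continuous fun x : X =>
              (((hre (stoneCechUnit x) + δ)⁻¹ : ℝ) : 𝕜) :=
            RCLike.continuous_ofReal.comp
              (((hrecont.comp continuous_stoneCechUnit).add continuous_const).inv₀
                fun x => by have := hrenn (stoneCechUnit x); exact ne_of_gt (show 0 < hre (stoneCechUnit x) + δ by linarith))
          set v : X →ᵇ 𝕜 := BoundedContinuousFunction.ofNormedAddCommGroup
            (fun x => (((hre (stoneCechUnit x) + δ)⁻¹ : ℝ) : 𝕜)) hvcont δ⁻¹
            (fun x => by
              have h0 := hrenn (stoneCechUnit x)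
              rw [RCLike.norm_ofReal, abs_of_nonneg (by positivity)]
              exact inv_anti₀ hδ (by linarith)) with hvdef
          set g : X →ᵇ 𝕜 :=
            ∑ i ∈ t, ((f0 * star (i : X →ᵇ 𝕜) * v) * (i : X →ᵇ 𝕜)) with hgdef
          have hgH : g ∈ H := Ideal.sum_mem H fun i _ => H.mul_mem_left _ i.2
          refine ⟨g, hgH, ?_⟩
          rw [dist_eq_norm]
          have key : ‖f0 - g‖ ≤ ε / 2 := by
            refine (BoundedContinuousFunction.norm_le (by positivity)).mpr fun x => ?_
            set s := hre (stoneCechUnit x) with hsdef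
            have hs0 : 0 ≤ s := hrenn _
            have hvx : v x = (((s + δ)⁻¹ : ℝ) : 𝕜) := rfl
            have hsum : ((s : ℝ) : 𝕜) = ∑ i ∈ t, ((‖((i : X →ᵇ 𝕜)) x‖ ^ 2 : ℝ) : 𝕜) := by
              rw [hsdef, hredef]
              push_cast
              simp [betaExt_unit]
            have hgx : g x = f0 x * v x * ((s : ℝ) : 𝕜) := by
              rw [hgdef]
              simp only [BoundedContinuousFunction.coe_sum, Finset.sum_apply,
                BoundedContinuousFunction.mul_apply, BoundedContinuousFunction.star_apply]
              rw [hsum, Finset.mul_sum]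
              refine Finset.sum_congr rfl fun i _ => ?_
              rw [RCLike.star_def, RCLike.ofReal_pow, ← RCLike.conj_mul (((i : X →ᵇ 𝕜)) x)]
              ring
            have hδs : (0 : ℝ) < s + δ := by positivity
            have hdiff : f0 x - g x = f0 x * ((δ / (s + δ) : ℝ) : 𝕜) := by
              rw [hgx, hvx]
              have h1 : (1 : ℝ) - (s + δ)⁻¹ * s = δ / (s + δ) := by
                field_simp
                ring
              calc f0 x - f0 x * (((s + δ)⁻¹ : ℝ) : 𝕜) * ((s : ℝ) : 𝕜)
                  = f0 x * (((1 : ℝ) - (s + δ)⁻¹ * s : ℝ) : 𝕜) := by push_cast; ring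
                _ = f0 x * ((δ / (s + δ) : ℝ) : 𝕜) := by rw [h1]
            rw [BoundedContinuousFunction.sub_apply, hdiff, norm_mul, RCLike.norm_ofReal,
              abs_of_nonneg (by positivity)]
            by_cases hx : ‖f0 x‖ ≤ ε / 2
            · have h1 : δ / (s + δ) ≤ 1 := (div_le_one hδs).mpr (by linarith)
              calc ‖f0 x‖ * (δ / (s + δ)) ≤ ε / 2 * 1 :=
                    mul_le_mul hx h1 (by positivity) (by positivity)
                _ = ε / 2 := mul_one _
            · push_neg at hx
              have hq : stoneCechUnit x ∈ Subtype.val '' K := by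
                by_contra hnot
                have hlt := hK ⟨stoneCechUnit x, hmem x⟩
                  (fun hmemK => hnot (mem_image_of_mem _ hmemK))
                rw [show φ ⟨stoneCechUnit x, hmem x⟩ = f0 x from
                  (hΦpos _ (hmem x)).symm] at hlt
                linarith
              have hsm : m ≤ s := isMinOn_iff.mp hp0min _ hq
              have hfrac : δ / (s + δ) ≤ δ / m :=
                div_le_div_of_nonneg_left hδ.le hm (by linarith)
              calc ‖f0 x‖ * (δ / (s + δ)) ≤ ‖f0‖ * (δ / m) :=
                    mul_le_mul (BoundedContinuousFunction.norm_coe_le_norm f0 x) hfrac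
                      (by positivity) (norm_nonneg _)
                _ ≤ ε / 2 := by
                    have hmne : m ≠ 0 := hm.ne'
                    have hdm : δ / m = ε / (2 * (‖f0‖ + 1)) := by
                      rw [hδdef]
                      field_simp
                    rw [hdm, mul_div_assoc' ‖f0‖ ε (2 * (‖f0‖ + 1)),
                      div_le_div_iff₀ (by positivity) two_pos]
                    nlinarith [norm_nonneg f0, hε.le]
          linarith
        · refine ⟨0, H.zero_mem, ?_⟩
          rw [dist_eq_norm, sub_zero]
          have hb : ‖f0‖ ≤ ε / 2 := by
            refine (BoundedContinuousFunction.norm_le (by positivity)).mpr fun x => ?_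
            have hlt := hK ⟨stoneCechUnit x, hmem x⟩ (fun hq => hKne ⟨_, hq⟩)
            calc ‖f0 x‖ = ‖φ ⟨stoneCechUnit x, hmem x⟩‖ := by
                  rw [show f0 x = Φ (stoneCechUnit x) from rfl, hΦpos _ (hmem x)]
              _ ≤ ε / 2 := hlt.le
          linarith
      rwa [hcl.closure_eq] at hmemcl
    exact ⟨⟨f0, hf0mem⟩, ZeroAtInftyContinuousMap.ext fun q => by
      rw [specMap_apply]
      show betaExt f0 ↑q = φ q
      rw [hf0ext]
      exact hΦpos _ q.2⟩
  refine ⟨hopen, hopen.locallyCompactSpace, inferInstance, hmem, hdense,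
    specMap H, ⟨hinj, hsurj⟩, ?_, ?_, ?_, hnorm⟩
  · intro f g
    refine ZeroAtInftyContinuousMap.ext fun q => ?_
    simp only [specMap_apply, ZeroAtInftyContinuousMap.coe_add, Pi.add_apply,
      Submodule.coe_add, betaExt_add]
  · intro c f
    refine ZeroAtInftyContinuousMap.ext fun q => ?_
    simp only [specMap_apply, ZeroAtInftyContinuousMap.coe_smul, Pi.smul_apply,
      betaExt_smul]
  · intro f g
    refine ZeroAtInftyContinuousMap.ext fun q => ?_
    simp only [specMap_apply, ZeroAtInftyContinuousMap.coe_mul, Pi.mul_apply,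
      betaExt_mul]
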